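/- arXiv:0912.3310 — 4 statements merged into one kernel-verified Lean document; each statement's English description precedes it below -/
import Mathlib

section
/- Let G be a finite undirected graph and v a vertex with neighborhood N(v). Consider the linear program over bid vectors ν : V → ℝ (with cost vector c = e_v, the indicator of v) maximizing the sum of ν over the cheapest vertex cover V∖{v}, subject to: ν(u) ≥ 0 for all u, ν(v) = 1 (the losing agent bids its cost), and for every vertex cover T of G, ∑_{u ∈ V∖{v}} ν(u) ≤ ∑_{u ∈ T} ν(u). Then the optimal value of this LP equals the fractional clique number of the subgraph induced by N(v) (with v removed). -/
open Finset

/-- For a non-isolated vertex `v` of a finite graph `G` with cost vector the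
indicator of `v`, the optimal value of the buyer-pessimal Nash LP (maximize the
total bid of the winning vertex cover `V \ {v}`, subject to nonnegativity,
`ν v = 1`, and the winning set being no more expensive than any vertex cover)
equals the fractional clique number of the subgraph induced by the
neighborhood of `v`. -/
theorem stmt4 {V : Type*} [Fintype V] [DecidableEq V]
    (G : SimpleGraph V) [DecidableRel G.Adj]
    (v : V) (hv : ∃ u, G.Adj v u) :
    sSup {r : ℝ | ∃ ν : V → ℝ,
        (∀ u, 0 ≤ ν u) ∧ ν v = 1 ∧
        (∀ T : Finset V, (∀ a b : V, G.Adj a b → a ∈ T ∨ b ∈ T) →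
          ∑ u ∈ Finset.univ.erase v, ν u ≤ ∑ u ∈ T, ν u) ∧
        r = ∑ u ∈ Finset.univ.erase v, ν u}
    = sSup {r : ℝ | ∃ x : V → ℝ,
        (∀ u, 0 ≤ x u) ∧ (∀ u, ¬ G.Adj v u → x u = 0) ∧
        (∀ I : Finset V, (∀ a ∈ I, G.Adj v a) →
          (∀ a ∈ I, ∀ b ∈ I, ¬ G.Adj a b) → ∑ u ∈ I, x u ≤ 1) ∧
        r = ∑ u ∈ Finset.univ.filter (fun u => G.Adj v u), x u} := by
  congr 1
  ext r
  constructor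
  · rintro ⟨ν, h0, hv1, hT, rfl⟩
    -- ν vanishes on non-neighbors other than v
    have hzero : ∀ u, u ≠ v → ¬ G.Adj v u → ν u = 0 := by
      intro u hu ha
      have hcov : ∀ a b : V, G.Adj a b →
          a ∈ (Finset.univ.erase v).erase u ∨ b ∈ (Finset.univ.erase v).erase u := by
        intro a b hab
        simp only [mem_erase, mem_univ, and_true]
        by_contra hc
        push_neg at hc
        obtain ⟨ha1, hb1⟩ := hc
        by_cases h1 : a = u
        · by_cases h2 : b = u
          · rw [h1, h2] at hab; exact G.loopless.irrefl u hab
          · rw [h1, hb1 h2] at hab; exact ha hab.symm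
        · by_cases h2 : b = u
          · rw [ha1 h1, h2] at hab; exact ha hab
          · rw [ha1 h1, hb1 h2] at hab; exact G.loopless.irrefl v hab
      have h1 := hT _ hcov
      have h2 : ∑ w ∈ (Finset.univ.erase v).erase u, ν w + ν u
          = ∑ w ∈ Finset.univ.erase v, ν w :=
        Finset.sum_erase_add _ _ (by simp [hu])
      have := h0 u
      linarith
    have hsubE : Finset.univ.filter (fun u => G.Adj v u) ⊆ Finset.univ.erase v := by
      intro u hu
      simp only [mem_filter, mem_univ, true_and] at hu
      exact mem_erase.mpr ⟨hu.ne', mem_univ u⟩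
    have hsumE : ∑ u ∈ Finset.univ.filter (fun u => G.Adj v u), ν u
        = ∑ u ∈ Finset.univ.erase v, ν u := by
      refine Finset.sum_subset hsubE ?_
      intro u hu hnu
      simp only [mem_filter, mem_univ, true_and] at hnu
      exact hzero u (mem_erase.mp hu).1 hnu
    refine ⟨fun u => if G.Adj v u then ν u else 0, ?_, ?_, ?_, ?_⟩
    · intro u; dsimp only; split
      · exact h0 u
      · exact le_rfl
    · intro u h; exact if_neg h
    · intro I hI hInd
      have hsum : ∑ u ∈ I, (if G.Adj v u then ν u else 0) = ∑ u ∈ I, ν u :=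
        Finset.sum_congr rfl fun u hu => if_pos (hI u hu)
      rw [hsum]
      have hcov : ∀ a b : V, G.Adj a b → a ∈ Finset.univ \ I ∨ b ∈ Finset.univ \ I := by
        intro a b hab
        simp only [mem_sdiff, mem_univ, true_and]
        by_contra h
        push_neg at h
        exact hInd a h.1 b h.2 hab
      have h1 := hT _ hcov
      have h2 : ∑ u ∈ Finset.univ \ I, ν u
          = ∑ u ∈ Finset.univ, ν u - ∑ u ∈ I, ν u :=
        Finset.sum_sdiff_eq_sub (Finset.subset_univ I)
      have h3 : ∑ u ∈ Finset.univ.erase v, ν u = ∑ u ∈ Finset.univ, ν u - ν v :=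
        Finset.sum_erase_eq_sub (mem_univ v)
      rw [h2] at h1
      rw [h3, hv1] at h1
      linarith
    · rw [← hsumE]
      exact (Finset.sum_congr rfl fun u hu => by
        simp only [mem_filter, mem_univ, true_and] at hu
        exact (if_pos hu).symm)
  · rintro ⟨x, hx0, hxs, hxI, rfl⟩
    set ν : V → ℝ := fun u => if u = v then 1 else x u with hν
    have hνnn : ∀ u, 0 ≤ ν u := by
      intro u; by_cases h : u = v <;> simp [hν, h, hx0 u]
    have hEsum : ∑ u ∈ Finset.univ.erase v, ν u
        = ∑ u ∈ Finset.univ.filter (fun u => G.Adj v u), x u := by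
      have h1 : ∑ u ∈ Finset.univ.erase v, ν u = ∑ u ∈ Finset.univ.erase v, x u :=
        Finset.sum_congr rfl fun u hu => if_neg (mem_erase.mp hu).1
      have hsubE : Finset.univ.filter (fun u => G.Adj v u) ⊆ Finset.univ.erase v := by
        intro u hu
        simp only [mem_filter, mem_univ, true_and] at hu
        exact mem_erase.mpr ⟨hu.ne', mem_univ u⟩
      rw [h1]
      refine (Finset.sum_subset hsubE ?_).symm
      intro u hu hnu
      simp only [mem_filter, mem_univ, true_and] at hnu
      exact hxs u hnu
    refine ⟨ν, hνnn, if_pos rfl, ?_, hEsum.symm⟩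
    intro T hTcov
    rw [hEsum]
    by_cases hvT : v ∈ T
    · have hTsum : ∑ u ∈ T, ν u = 1 + ∑ u ∈ T.erase v, x u := by
        rw [← Finset.sum_erase_add _ _ hvT]
        have : ∑ u ∈ T.erase v, ν u = ∑ u ∈ T.erase v, x u :=
          Finset.sum_congr rfl fun u hu => if_neg (mem_erase.mp hu).1
        rw [this]
        simp [hν]
        ring
      set S := Finset.univ.filter (fun u => G.Adj v u) with hS
      have hsplit : ∑ u ∈ S ∩ T, x u + ∑ u ∈ S \ T, x u = ∑ u ∈ S, x u :=
        Finset.sum_inter_add_sum_sdiff S T x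
      have hb1 : ∑ u ∈ S \ T, x u ≤ 1 := by
        refine hxI (S \ T) ?_ ?_
        · intro a ha
          have := (mem_sdiff.mp ha).1
          simp only [hS, mem_filter, mem_univ, true_and] at this
          exact this
        · intro a ha b hb hab
          rcases hTcov a b hab with h | h
          · exact absurd h (mem_sdiff.mp ha).2
          · exact absurd h (mem_sdiff.mp hb).2
      have hb2 : ∑ u ∈ S ∩ T, x u ≤ ∑ u ∈ T.erase v, x u := by
        refine Finset.sum_le_sum_of_subset_of_nonneg ?_ fun u _ _ => hx0 u
        intro u hu
        rcases mem_inter.mp hu with ⟨huS, huT⟩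
        simp only [hS, mem_filter, mem_univ, true_and] at huS
        exact mem_erase.mpr ⟨huS.ne', huT⟩
      rw [hTsum]
      linarith
    · have hsub : Finset.univ.filter (fun u => G.Adj v u) ⊆ T := by
        intro u hu
        simp only [mem_filter, mem_univ, true_and] at hu
        rcases hTcov v u hu with h | h
        · exact absurd h hvT
        · exact h
      calc ∑ u ∈ Finset.univ.filter (fun u => G.Adj v u), x u
          ≤ ∑ u ∈ T, x u :=
            Finset.sum_le_sum_of_subset_of_nonneg hsub fun u _ _ => hx0 u
        _ = ∑ u ∈ T, ν u :=
            (Finset.sum_congr rfl fun u hu => (if_neg fun (h : u = v) => hvT (h ▸ hu)).symm)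
end

section
/- Let H be a directed graph consisting of k+1 pairwise edge-disjoint s–t paths, and let e=(u,v), e'=(u',v') be edges of H such that there is a directed path from v to u'. Then there exist k edge-disjoint s–t paths in H avoiding both e and e'; equivalently, no s–t cut of size k+1 contains both e and e'. -/
/-- A directed walk in a (multi)graph with edge set `E`, tail map `tl` and head
map `hd`. -/
inductive DWalk {V E : Type} (tl hd : E → V) : V → V → List E → Prop
  | nil (v : V) : DWalk tl hd v v []
  | cons (e : E) {b : V} {l : List E} (h : DWalk tl hd (hd e) b l) :
      DWalk tl hd (tl e) b (e :: l)

open scoped Classical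

namespace Stmt8Aux

variable {V E : Type}

noncomputable def ind (a w : V) : ℤ := if a = w then 1 else 0

noncomputable def sgn (tl hd : E → V) (w : V) (f : E) : ℤ := ind (tl f) w - ind (hd f) w

noncomputable def exc (tl hd : E → V) (F : Finset E) (w : V) : ℤ := ∑ f ∈ F, sgn tl hd w f

noncomputable def lexc (tl hd : E → V) (L : List E) (w : V) : ℤ := (L.map (sgn tl hd w)).sum

theorem lexc_cons (tl hd : E → V) (f : E) (L : List E) (w : V) :
    lexc tl hd (f :: L) w = sgn tl hd w f + lexc tl hd L w := by simp [lexc]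

theorem dwalk_append {tl hd : E → V} {a b c : V} {L₁ L₂ : List E}
    (h1 : DWalk tl hd a b L₁) (h2 : DWalk tl hd b c L₂) :
    DWalk tl hd a c (L₁ ++ L₂) := by
  induction h1 with
  | nil v => simpa using h2
  | cons f h ih => exact DWalk.cons f (ih h2)

theorem dwalk_split {tl hd : E → V} {a b : V} {L : List E} (h : DWalk tl hd a b L)
    {x : E} (hx : x ∈ L) :
    ∃ P Q, L = P ++ x :: Q ∧ DWalk tl hd a (tl x) P ∧ DWalk tl hd (hd x) b Q := by
  induction h with
  | nil v => simp at hx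
  | cons f h ih =>
    rcases List.mem_cons.1 hx with rfl | hx'
    · exact ⟨[], _, rfl, DWalk.nil _, h⟩
    · obtain ⟨P, Q, hPQ, h1, h2⟩ := ih hx'
      exact ⟨f :: P, Q, by rw [hPQ]; rfl, DWalk.cons f h1, h2⟩

theorem lexc_walk {tl hd : E → V} {a b : V} {L : List E} (h : DWalk tl hd a b L) (w : V) :
    lexc tl hd L w = ind a w - ind b w := by
  induction h with
  | nil v => simp [lexc]
  | cons f h ih => rw [lexc_cons, ih]; simp only [sgn]; ring

theorem exc_toFinset {tl hd : E → V} {L : List E} (hnd : L.Nodup) (w : V) :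
    exc tl hd L.toFinset w = lexc tl hd L w := by
  rw [exc, List.sum_toFinset _ hnd]; rfl

theorem extract {tl hd : E → V} (Tset : Set V) :
    ∀ (n : ℕ) (F : Finset E) (a : V), F.card ≤ n → 0 < exc tl hd F a →
      (∀ w, w ≠ a → w ∉ Tset → 0 ≤ exc tl hd F w) →
      ∃ w, w ∈ Tset ∧ ∃ L, L.Nodup ∧ DWalk tl hd a w L ∧ ∀ x ∈ L, x ∈ F := by
  intro n
  induction n with
  | zero =>
    intro F a hc hpos _
    have hF : F = ∅ := Finset.card_eq_zero.1 (Nat.le_zero.1 hc)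
    subst hF
    simp [exc] at hpos
  | succ n ih =>
    intro F a hc hpos hnn
    have hex : ∃ f ∈ F, tl f = a := by
      by_contra hcon
      push_neg at hcon
      have hle : exc tl hd F a ≤ 0 := by
        refine Finset.sum_nonpos fun f hf => ?_
        have hne : tl f ≠ a := hcon f hf
        simp only [sgn, ind, if_neg hne]
        split <;> omega
      omega
    obtain ⟨f, hfF, hfa⟩ := hex
    by_cases hbT : hd f ∈ Tset
    · refine ⟨hd f, hbT, [f], by simp, ?_, by simpa using hfF⟩
      rw [← hfa]; exact DWalk.cons f (DWalk.nil _)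
    · have hcard : (F.erase f).card ≤ n := by
        have := Finset.card_erase_of_mem hfF
        omega
      have hexc_erase : ∀ w, exc tl hd (F.erase f) w = exc tl hd F w - sgn tl hd w f := by
        intro w
        rw [exc, exc, ← Finset.sum_erase_add _ _ hfF]
        ring
      have h1 : 0 < exc tl hd (F.erase f) (hd f) := by
        rw [hexc_erase]
        by_cases hba : hd f = a
        · rw [hba]
          have hs : sgn tl hd a f = 0 := by
            simp [sgn, ind, hfa, hba]
          omega
        · have hs : sgn tl hd (hd f) f = -1 := by
            have h0 : tl f ≠ hd f := by rw [hfa]; exact fun h => hba h.symm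
            simp [sgn, ind, h0]
          have := hnn (hd f) hba hbT
          omega
    -- second hypothesis
      have h2 : ∀ w, w ≠ hd f → w ∉ Tset → 0 ≤ exc tl hd (F.erase f) w := by
        intro w hwb hwT
        rw [hexc_erase]
        by_cases hwa : w = a
        · subst hwa
          have hs : sgn tl hd w f = 1 := by
            have h0 : hd f ≠ w := fun h => hwb h.symm
            simp [sgn, ind, hfa, h0]
          omega
        · have hs : sgn tl hd w f = 0 := by
            have h0 : tl f ≠ w := by rw [hfa]; exact fun h => hwa h.symm
            have h1' : hd f ≠ w := fun h => hwb h.symm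
            simp [sgn, ind, h0, h1']
          have := hnn w (fun h => hwa h) hwT
          omega
      obtain ⟨w, hwT, L, hnd, hwalk, hsub⟩ := ih (F.erase f) (hd f) hcard h1 h2
      refine ⟨w, hwT, f :: L, ?_, ?_, ?_⟩
      · refine List.nodup_cons.2 ⟨fun hfL => ?_, hnd⟩
        exact (Finset.ne_of_mem_erase (hsub f hfL)) rfl
      · rw [← hfa]; exact DWalk.cons f hwalk
      · intro x hx
        rcases List.mem_cons.1 hx with rfl | hx'
        · exact hfF
        · exact Finset.mem_of_mem_erase (hsub x hx')

theorem main {tl hd : E → V} {s t : V} (hst : s ≠ t) :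
    ∀ (n : ℕ) (F : Finset E),
      (∀ w, exc tl hd F w = n * (ind s w - ind t w)) →
      ∃ p : Fin n → List E, (∀ i, DWalk tl hd s t (p i)) ∧ (∀ i, (p i).Nodup) ∧
        (∀ i j, i ≠ j → ∀ f, f ∈ p i → f ∉ p j) ∧ (∀ i, ∀ x ∈ p i, x ∈ F) := by
  intro n
  induction n with
  | zero =>
    intro F _
    exact ⟨Fin.elim0, fun i => i.elim0, fun i => i.elim0, fun i => i.elim0, fun i => i.elim0⟩
  | succ n ih =>
    intro F hF
    have hts : t ≠ s := fun h => hst h.symm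
    have hpos : 0 < exc tl hd F s := by
      have h3 : exc tl hd F s = (n : ℤ) + 1 := by
        rw [hF]
        simp only [ind, if_pos rfl, if_neg hts]
        push_cast
        ring
      omega
    have hnn : ∀ w, w ≠ s → w ∉ ({t} : Set V) → 0 ≤ exc tl hd F w := by
      intro w hws hwt
      have h1 : s ≠ w := fun h => hws h.symm
      have h2 : t ≠ w := fun h => hwt (by simp [h.symm])
      have h3 : exc tl hd F w = 0 := by
        rw [hF]
        simp only [ind, if_neg h1, if_neg h2]
        ring
      omega
    obtain ⟨w, hwT, L, hnd, hwalk, hsub⟩ := extract {t} F.card F s le_rfl hpos hnn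
    have hwt : w = t := hwT
    rw [hwt] at hwalk
    have hsubF : L.toFinset ⊆ F := fun x hx => hsub x (List.mem_toFinset.1 hx)
    have hF' : ∀ w, exc tl hd (F \ L.toFinset) w = n * (ind s w - ind t w) := by
      intro w
      have hsd : exc tl hd (F \ L.toFinset) w + exc tl hd L.toFinset w = exc tl hd F w :=
        Finset.sum_sdiff hsubF
      have h2 : exc tl hd L.toFinset w = ind s w - ind t w := by
        rw [exc_toFinset hnd, lexc_walk hwalk]
      rw [hF, h2] at hsd
      have hr : ((n : ℤ) + 1) * (ind s w - ind t w)
          = n * (ind s w - ind t w) + (ind s w - ind t w) := by ring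
      push_cast at hsd ⊢
      linarith
    obtain ⟨q, hq1, hq2, hq3, hq4⟩ := ih (F \ L.toFinset) hF'
    refine ⟨Fin.cons L q, ?_, ?_, ?_, ?_⟩
    · intro i
      induction i using Fin.cases with
      | zero => simpa using hwalk
      | succ j => simpa using hq1 j
    · intro i
      induction i using Fin.cases with
      | zero => simpa using hnd
      | succ j => simpa using hq2 j
    · intro i
      induction i using Fin.cases with
      | zero =>
        intro j hij f hfi
        induction j using Fin.cases with
        | zero => exact absurd rfl hij
        | succ j =>
          simp only [Fin.cons_zero] at hfi
          simp only [Fin.cons_succ]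
          intro hfq
          exact (Finset.mem_sdiff.1 (hq4 j f hfq)).2 (List.mem_toFinset.2 hfi)
      | succ i =>
        intro j hij f hfi
        induction j using Fin.cases with
        | zero =>
          simp only [Fin.cons_succ] at hfi
          simp only [Fin.cons_zero]
          intro hfL
          exact (Finset.mem_sdiff.1 (hq4 i f hfi)).2 (List.mem_toFinset.2 hfL)
        | succ j =>
          simp only [Fin.cons_succ] at hfi ⊢
          exact hq3 i j (fun h => hij (congrArg Fin.succ h)) f hfi
    · intro i
      induction i using Fin.cases with
      | zero => intro x hx; exact hsub x (by simpa using hx)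
      | succ j =>
        intro x hx
        exact (Finset.mem_sdiff.1 (hq4 j x (by simpa using hx))).1

theorem rtg_of_walk_fwd {tl hd : E → V} {r : V → V → Prop} :
    ∀ {L : List E} {a b : V}, DWalk tl hd a b L → (∀ x ∈ L, r (tl x) (hd x)) →
      Relation.ReflTransGen r a b := by
  intro L a b h hr
  induction h with
  | nil v => exact Relation.ReflTransGen.refl
  | cons f h ih =>
    exact Relation.ReflTransGen.head (hr f (by simp)) (ih fun x hx => hr x (by simp [hx]))

theorem rtg_of_walk_bwd {tl hd : E → V} {r : V → V → Prop} :
    ∀ {L : List E} {a b : V}, DWalk tl hd a b L → (∀ x ∈ L, r (hd x) (tl x)) →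
      Relation.ReflTransGen r b a := by
  intro L a b h hr
  induction h with
  | nil v => exact Relation.ReflTransGen.refl
  | cons f h ih =>
    exact Relation.ReflTransGen.tail (ih fun x hx => hr x (by simp [hx])) (hr f (by simp))

theorem walk_of_rtg {E' : Type} {tl' hd' : E' → V} {P : E' → Prop} {r : V → V → Prop}
    (hr : ∀ a b, r a b → ∃ z, P z ∧ tl' z = a ∧ hd' z = b) {a b : V}
    (h : Relation.ReflTransGen r a b) :
    ∃ L, DWalk tl' hd' a b L ∧ ∀ z ∈ L, P z := by
  induction h with
  | refl => exact ⟨[], DWalk.nil _, by simp⟩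
  | tail hab hbc ih =>
    obtain ⟨L, hL, hP⟩ := ih
    obtain ⟨z, hz, hz1, hz2⟩ := hr _ _ hbc
    refine ⟨L ++ [z], ?_, ?_⟩
    · refine dwalk_append hL ?_
      rw [← hz1, ← hz2]
      exact DWalk.cons z (DWalk.nil _)
    · intro x hx
      rcases List.mem_append.1 hx with hx' | hx'
      · exact hP x hx'
      · rw [List.mem_singleton.1 hx']
        exact hz

theorem dedup {E' : Type} {tl' hd' : E' → V} {κ : E' → E}
    (hκ : ∀ x y, κ x = κ y → (tl' x = tl' y ∧ hd' x = hd' y) ∨ (tl' x = hd' y ∧ hd' x = tl' y)) :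
    ∀ {L : List E'} {a b : V}, DWalk tl' hd' a b L →
      ∃ L', DWalk tl' hd' a b L' ∧ (L'.map κ).Nodup ∧ ∀ x ∈ L', x ∈ L := by
  intro L a b h
  induction h with
  | nil v => exact ⟨[], DWalk.nil v, by simp, by simp⟩
  | cons z h ih =>
    obtain ⟨L', hL', hnd, hsub⟩ := ih
    by_cases hz : κ z ∈ L'.map κ
    · obtain ⟨y, hyL', hyz⟩ := List.mem_map.1 hz
      obtain ⟨P, Q, hPQ, hP, hQ⟩ := dwalk_split hL' hyL'
      have hQsub : ∀ x ∈ y :: Q, x ∈ L' := by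
        intro x hx
        rw [hPQ]
        rcases List.mem_cons.1 hx with rfl | hx'
        · exact List.mem_append.2 (Or.inr (List.mem_cons_self))
        · exact List.mem_append.2 (Or.inr (List.mem_cons_of_mem _ hx'))
      rcases hκ y z hyz with ⟨h1, h2⟩ | ⟨h1, h2⟩
      · refine ⟨y :: Q, ?_, ?_, ?_⟩
        · rw [← h1]; exact DWalk.cons y hQ
        · refine List.Nodup.sublist (List.Sublist.map κ ?_) hnd
          rw [hPQ]
          exact List.sublist_append_right _ _
        · intro x hx
          exact List.mem_cons_of_mem z (hsub x (hQsub x hx))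
      · refine ⟨Q, ?_, ?_, ?_⟩
        · rw [← h2]; exact hQ
        · refine List.Nodup.sublist (List.Sublist.map κ ?_) hnd
          rw [hPQ]
          exact (List.sublist_cons_self _ _).trans (List.sublist_append_right _ _)
        · intro x hx
          exact List.mem_cons_of_mem z (hsub x (hQsub x (List.mem_cons_of_mem _ hx)))
    · refine ⟨z :: L', DWalk.cons z hL', ?_, ?_⟩
      · exact List.nodup_cons.2 ⟨hz, hnd⟩
      · intro x hx
        rcases List.mem_cons.1 hx with rfl | hx'
        · exact List.mem_cons_self
        · exact List.mem_cons_of_mem _ (hsub x hx')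

/-- residual tail/head maps on `E × Bool` (`true` = forward, `false` = backward). -/
def rtl (tl hd : E → V) : E × Bool → V := fun z => match z with
  | (x, true) => tl x
  | (x, false) => hd x

def rhd (tl hd : E → V) : E × Bool → V := fun z => match z with
  | (x, true) => hd x
  | (x, false) => tl x

theorem lexc_res (tl hd : E → V) (w : V) :
    ∀ ρ : List (E × Bool),
      lexc (rtl tl hd) (rhd tl hd) ρ w
        = lexc tl hd ((ρ.filter (fun z => z.2)).map Prod.fst) w
          - lexc tl hd ((ρ.filter (fun z => !z.2)).map Prod.fst) w := by
  intro ρ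
  induction ρ with
  | nil => simp [lexc]
  | cons z ρ ih =>
    obtain ⟨x, b⟩ := z
    cases b <;>
      simp only [List.filter_cons, lexc_cons, ih, List.map_cons, Bool.not_true, Bool.not_false,
        ite_true, ite_false, Bool.false_eq_true, Bool.true_eq_false] <;>
      simp [lexc_cons, sgn, rtl, rhd, ind] <;>
      (by_cases h1 : hd x = w <;> by_cases h2 : tl x = w <;> simp [h1, h2] <;> ring)

theorem avoid (tl hd : E → V) (e e' : E) :
    ∀ (n : ℕ) (l : List E), l.length ≤ n → DWalk tl hd (hd e) (tl e') l →
      ∃ l', DWalk tl hd (hd e) (tl e') l' ∧ e ∉ l' ∧ e' ∉ l' := by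
  intro n
  induction n with
  | zero =>
    intro l hl h
    have : l = [] := List.eq_nil_of_length_eq_zero (Nat.le_zero.1 hl)
    subst this
    exact ⟨[], h, by simp, by simp⟩
  | succ n ih =>
    intro l hl h
    by_cases he : e ∈ l
    · obtain ⟨P, Q, hPQ, hP, hQ⟩ := dwalk_split h he
      refine ih Q ?_ hQ
      have := congrArg List.length hPQ
      simp at this
      omega
    · by_cases he' : e' ∈ l
      · obtain ⟨P, Q, hPQ, hP, hQ⟩ := dwalk_split h he'
        refine ih P ?_ hP
        have := congrArg List.length hPQ
        simp at this
        omega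
      · exact ⟨l, h, he, he'⟩

end Stmt8Aux

open Stmt8Aux

/-- Let `H` be the edge-disjoint union of `k+1` directed `s`-`t` paths, and let
`e`, `e'` be edges such that the tail of `e'` is reachable from the head of `e`.
Then there exist `k` edge-disjoint `s`-`t` paths in `H` avoiding both `e` and `e'`. -/
theorem stmt8 {V E : Type} [Fintype E] (tl hd : E → V) (s t : V) (k : ℕ)
    (hH : ∃ p : Fin (k + 1) → List E,
      (∀ i, DWalk tl hd s t (p i)) ∧ (∀ i, (p i).Nodup) ∧
      (∀ i j, i ≠ j → ∀ e, e ∈ p i → e ∉ p j) ∧ (∀ e : E, ∃ i, e ∈ p i))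
    (e e' : E) (hne : e ≠ e')
    (hreach : ∃ l, DWalk tl hd (hd e) (tl e') l) :
    ∃ p : Fin k → List E,
      (∀ i, DWalk tl hd s t (p i)) ∧ (∀ i, (p i).Nodup) ∧
      (∀ i j, i ≠ j → ∀ f, f ∈ p i → f ∉ p j) ∧
      (∀ i, e ∉ p i ∧ e' ∉ p i) := by

  classical
  obtain ⟨p, hw, hnd, hdisj, hcov⟩ := hH
  by_cases hst : s = t
  · subst hst
    exact ⟨fun _ => [], fun _ => DWalk.nil s, fun _ => by simp,
      fun i j _ f hf => by simp at hf, fun _ => by simp⟩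
  -- Construct a set S containing e, e' with boundary χ_s - χ_t.
  have hS : ∃ S : Finset E, e ∈ S ∧ e' ∈ S ∧
      ∀ w, exc tl hd S w = ind s w - ind t w := by
    by_cases hsame : ∃ i, e ∈ p i ∧ e' ∈ p i
    · obtain ⟨i, hei, he'i⟩ := hsame
      refine ⟨(p i).toFinset, List.mem_toFinset.2 hei, List.mem_toFinset.2 he'i, fun w => ?_⟩
      rw [exc_toFinset (hnd i), lexc_walk (hw i)]
    · obtain ⟨i0, hei0⟩ := hcov e
      obtain ⟨j0, he'j0⟩ := hcov e'
      have hij : i0 ≠ j0 := fun h => hsame ⟨i0, hei0, h ▸ he'j0⟩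
      have he'pi0 : e' ∉ p i0 := fun h => hsame ⟨i0, hei0, h⟩
      obtain ⟨A, A2, hA_eq, hA, hA2⟩ := dwalk_split (hw i0) hei0
      obtain ⟨B1, B, hB_eq, hB1, hB⟩ := dwalk_split (hw j0) he'j0
      -- nodup facts
      have hndA := hnd i0
      rw [hA_eq] at hndA
      have h5 := List.nodup_append.1 hndA
      have heA2 : e ∉ A2 := (List.nodup_cons.1 h5.2.1).1
      have hndB := hnd j0
      rw [hB_eq] at hndB
      have h6 := List.nodup_append.1 hndB
      have he'B1 : e' ∉ B1 := fun h => h6.2.2 e' h e' List.mem_cons_self rfl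
      have he'B : e' ∉ B := (List.nodup_cons.1 h6.2.1).1
      -- membership facts
      have hmemA : ∀ x ∈ A, x ∈ p i0 := fun x hx => by
        rw [hA_eq]; exact List.mem_append.2 (Or.inl hx)
      have hmemA2 : ∀ x ∈ A2, x ∈ p i0 := fun x hx => by
        rw [hA_eq]; exact List.mem_append.2 (Or.inr (List.mem_cons_of_mem _ hx))
      have hmemB1 : ∀ x ∈ B1, x ∉ p i0 := fun x hx hx' => by
        have : x ∈ p j0 := by rw [hB_eq]; exact List.mem_append.2 (Or.inl hx)
        exact hdisj i0 j0 hij x hx' this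
      have hmemB : ∀ x ∈ B, x ∉ p i0 := fun x hx hx' => by
        have : x ∈ p j0 := by
          rw [hB_eq]; exact List.mem_append.2 (Or.inr (List.mem_cons_of_mem _ hx))
        exact hdisj i0 j0 hij x hx' this
      -- walk from hd e to tl e' avoiding e, e'
      obtain ⟨l, hl⟩ := hreach
      obtain ⟨W, hW, heW, he'W⟩ := avoid tl hd e e' l.length l le_rfl hl
      -- residual relation
      set R : V → V → Prop := fun a b => ∃ x : E,
        ((x ∉ p i0 ∧ x ≠ e') ∧ tl x = a ∧ hd x = b)
          ∨ ((x ∈ p i0 ∧ x ≠ e) ∧ hd x = a ∧ tl x = b) with hRdef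
      have hres_fwd : ∀ x : E, x ∉ p i0 → x ≠ e' → R (tl x) (hd x) :=
        fun x h1 h2 => ⟨x, Or.inl ⟨⟨h1, h2⟩, rfl, rfl⟩⟩
      have hres_bwd : ∀ x : E, x ∈ p i0 → x ≠ e → R (hd x) (tl x) :=
        fun x h1 h2 => ⟨x, Or.inr ⟨⟨h1, h2⟩, rfl, rfl⟩⟩
      -- reachability steps
      have step1 : Relation.ReflTransGen R (hd e') t :=
        rtg_of_walk_fwd hB (fun x hx =>
          hres_fwd x (hmemB x hx) (fun h => he'B (h ▸ hx)))
      have step2 : Relation.ReflTransGen R t (hd e) :=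
        rtg_of_walk_bwd hA2 (fun x hx =>
          hres_bwd x (hmemA2 x hx) (fun h => heA2 (h ▸ hx)))
      have hs_reach : Relation.ReflTransGen R s (tl e') :=
        rtg_of_walk_fwd hB1 (fun x hx =>
          hres_fwd x (hmemB1 x hx) (fun h => he'B1 (h ▸ hx)))
      have hstart : Relation.ReflTransGen R (hd e') (hd e) := step1.trans step2
      -- main reachability claim
      have claim : ∀ (L : List E) (a : V), DWalk tl hd a (tl e') L →
          (∀ x ∈ L, x ≠ e ∧ x ≠ e') → Relation.ReflTransGen R (hd e') a →
          Relation.ReflTransGen R (hd e') (tl e') := by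
        intro L
        induction L with
        | nil =>
          intro a hwk _ hra
          cases hwk
          exact hra
        | cons x L ih =>
          intro a hwk hmem hra
          cases hwk with
          | cons _ h' =>
            by_cases hxi : x ∈ p i0
            · have hxA : x ∈ A ∨ x ∈ A2 := by
                rw [hA_eq] at hxi
                rcases List.mem_append.1 hxi with h | h
                · exact Or.inl h
                · rcases List.mem_cons.1 h with h | h
                  · exact absurd h (hmem x (List.mem_cons_self)).1
                  · exact Or.inr h
              rcases hxA with hxA | hxA2
              · obtain ⟨A1, A12, hA1_eq, hA1, _⟩ := dwalk_split hA hxA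
                have hback : Relation.ReflTransGen R (tl x) s :=
                  rtg_of_walk_bwd hA1 (fun y hy => by
                    have hyA : y ∈ A := by
                      rw [hA1_eq]; exact List.mem_append.2 (Or.inl hy)
                    refine hres_bwd y (hmemA y hyA) (fun h => ?_)
                    exact h5.2.2 e (h ▸ hyA) e List.mem_cons_self rfl)
                exact (hra.trans hback).trans hs_reach
              · obtain ⟨C, D, hCD, _, hD⟩ := dwalk_split hA2 hxA2
                have hDreach : Relation.ReflTransGen R t (hd x) :=
                  rtg_of_walk_bwd hD (fun y hy => by
                    have hyA2 : y ∈ A2 := by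
                      rw [hCD]
                      exact List.mem_append.2 (Or.inr (List.mem_cons_of_mem _ hy))
                    exact hres_bwd y (hmemA2 y hyA2) (fun h => heA2 (h ▸ hyA2)))
                exact ih (hd x) h' (fun y hy => hmem y (List.mem_cons_of_mem _ hy))
                  (step1.trans hDreach)
            · exact ih (hd x) h' (fun y hy => hmem y (List.mem_cons_of_mem _ hy))
                (hra.tail (hres_fwd x hxi (hmem x (List.mem_cons_self)).2))
      have hreach_end : Relation.ReflTransGen R (hd e') (tl e') :=
        claim W (hd e) hW
          (fun x hx => ⟨fun h => heW (h ▸ hx), fun h => he'W (h ▸ hx)⟩) hstart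
      -- convert to a residual walk
      have hr : ∀ a b, R a b → ∃ z : E × Bool,
          ((z.2 = true → (z.1 ∉ p i0 ∧ z.1 ≠ e')) ∧ (z.2 = false → (z.1 ∈ p i0 ∧ z.1 ≠ e)))
            ∧ rtl tl hd z = a ∧ rhd tl hd z = b := by
        rintro a b ⟨x, ⟨hx, h1, h2⟩ | ⟨hx, h1, h2⟩⟩
        · exact ⟨(x, true), ⟨fun _ => hx, fun h => by simp at h⟩, h1, h2⟩
        · exact ⟨(x, false), ⟨fun h => by simp at h, fun _ => hx⟩, h1, h2⟩
      obtain ⟨ρ0, hρ0, hρ0ok⟩ := walk_of_rtg hr hreach_end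
      have hκ : ∀ x y : E × Bool, x.1 = y.1 →
          (rtl tl hd x = rtl tl hd y ∧ rhd tl hd x = rhd tl hd y)
            ∨ (rtl tl hd x = rhd tl hd y ∧ rhd tl hd x = rtl tl hd y) := by
        rintro ⟨x1, x2⟩ ⟨y1, y2⟩ h
        dsimp at h
        subst h
        cases x2 <;> cases y2 <;> simp [rtl, rhd]
      obtain ⟨ρ, hρ, hρnd, hρsub⟩ := dedup hκ hρ0
      have hρok := fun z hz => hρ0ok z (hρsub z hz)
      set Fw : List E := (ρ.filter (fun z => z.2)).map Prod.fst with hFwdef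
      set Bk : List E := (ρ.filter (fun z => !z.2)).map Prod.fst with hBkdef
      have hFw_sub : ∀ x ∈ Fw, x ∉ p i0 ∧ x ≠ e' := by
        intro x hx
        obtain ⟨z, hzf, hz1⟩ := List.mem_map.1 hx
        have hz := List.mem_filter.1 hzf
        exact hz1 ▸ (hρok z hz.1).1 hz.2
      have hBk_sub : ∀ x ∈ Bk, x ∈ p i0 ∧ x ≠ e := by
        intro x hx
        obtain ⟨z, hzf, hz1⟩ := List.mem_map.1 hx
        have hz := List.mem_filter.1 hzf
        have : z.2 = false := by simpa using hz.2
        exact hz1 ▸ (hρok z hz.1).2 this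
      have hFw_nd : Fw.Nodup :=
        List.Nodup.sublist (List.Sublist.map _ List.filter_sublist) hρnd
      have hBk_nd : Bk.Nodup :=
        List.Nodup.sublist (List.Sublist.map _ List.filter_sublist) hρnd
      -- the set S
      refine ⟨((p i0).toFinset \ Bk.toFinset) ∪ Fw.toFinset ∪ {e'}, ?_, ?_, ?_⟩
      · refine Finset.mem_union.2 (Or.inl (Finset.mem_union.2 (Or.inl ?_)))
        refine Finset.mem_sdiff.2 ⟨List.mem_toFinset.2 hei0, fun h => ?_⟩
        exact (hBk_sub e (List.mem_toFinset.1 h)).2 rfl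
      · exact Finset.mem_union.2 (Or.inr (Finset.mem_singleton.2 rfl))
      · intro w
        have hd1 : Disjoint ((p i0).toFinset \ Bk.toFinset) Fw.toFinset := by
          rw [Finset.disjoint_left]
          intro x hx hx'
          exact (hFw_sub x (List.mem_toFinset.1 hx')).1
            (List.mem_toFinset.1 (Finset.mem_sdiff.1 hx).1)
        have hd2 : Disjoint (((p i0).toFinset \ Bk.toFinset) ∪ Fw.toFinset)
            ({e'} : Finset E) := by
          rw [Finset.disjoint_right]
          intro x hx
          rw [Finset.mem_singleton.1 hx]
          intro hx'
          rcases Finset.mem_union.1 hx' with h | h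
          · exact he'pi0 (List.mem_toFinset.1 (Finset.mem_sdiff.1 h).1)
          · exact (hFw_sub e' (List.mem_toFinset.1 h)).2 rfl
        have hBk_subset : Bk.toFinset ⊆ (p i0).toFinset := fun x hx =>
          List.mem_toFinset.2 (hBk_sub x (List.mem_toFinset.1 hx)).1
        show (∑ f ∈ _, sgn tl hd w f) = ind s w - ind t w
        rw [Finset.sum_union hd2, Finset.sum_union hd1, Finset.sum_sdiff_eq_sub hBk_subset,
          Finset.sum_singleton]
        have h7 : (∑ f ∈ (p i0).toFinset, sgn tl hd w f) = ind s w - ind t w := by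
          rw [show (∑ f ∈ (p i0).toFinset, sgn tl hd w f) = exc tl hd (p i0).toFinset w from rfl,
            exc_toFinset (hnd i0), lexc_walk (hw i0)]
        have h8 : (∑ f ∈ Fw.toFinset, sgn tl hd w f) = lexc tl hd Fw w :=
          exc_toFinset hFw_nd w
        have h9 : (∑ f ∈ Bk.toFinset, sgn tl hd w f) = lexc tl hd Bk w :=
          exc_toFinset hBk_nd w
        have h10 : lexc tl hd Fw w - lexc tl hd Bk w = ind (hd e') w - ind (tl e') w := by
          rw [hFwdef, hBkdef, ← lexc_res, lexc_walk hρ]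
        have h11 : sgn tl hd w e' = ind (tl e') w - ind (hd e') w := rfl
        rw [h7, h8, h9, h11]
        linarith
  -- now use S
  obtain ⟨S, heS, he'S, hSexc⟩ := hS
  have hpart : (Finset.univ : Finset E)
      = Finset.univ.biUnion (fun i : Fin (k + 1) => (p i).toFinset) := by
    ext f
    simp only [Finset.mem_univ, Finset.mem_biUnion, List.mem_toFinset, true_iff]
    obtain ⟨i, hi⟩ := hcov f
    exact ⟨i, trivial, hi⟩
  have hpd : (↑(Finset.univ : Finset (Fin (k + 1))) : Set (Fin (k + 1))).PairwiseDisjoint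
      (fun i => (p i).toFinset) := by
    intro i _ j _ hij
    exact Finset.disjoint_left.2 (fun x hx hx' =>
      hdisj i j hij x (List.mem_toFinset.1 hx) (List.mem_toFinset.1 hx'))
  have huniv : ∀ w, exc tl hd Finset.univ w = ((k : ℤ) + 1) * (ind s w - ind t w) := by
    intro w
    show (∑ f ∈ Finset.univ, sgn tl hd w f) = _
    rw [hpart, Finset.sum_biUnion hpd]
    have hcongr : ∀ i ∈ (Finset.univ : Finset (Fin (k + 1))),
        (∑ f ∈ (p i).toFinset, sgn tl hd w f) = ind s w - ind t w := fun i _ => by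
      rw [show (∑ f ∈ (p i).toFinset, sgn tl hd w f) = exc tl hd (p i).toFinset w from rfl,
        exc_toFinset (hnd i), lexc_walk (hw i)]
    rw [Finset.sum_congr rfl hcongr, Finset.sum_const, Finset.card_univ, Fintype.card_fin,
      nsmul_eq_mul]
    push_cast
    ring
  have hF : ∀ w, exc tl hd (Finset.univ \ S) w = (k : ℤ) * (ind s w - ind t w) := by
    intro w
    show (∑ f ∈ _, sgn tl hd w f) = _
    rw [Finset.sum_sdiff_eq_sub (Finset.subset_univ S)]
    have := huniv w
    have h2 := hSexc w
    rw [show (∑ f ∈ Finset.univ, sgn tl hd w f) = exc tl hd Finset.univ w from rfl, this,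
      show (∑ f ∈ S, sgn tl hd w f) = exc tl hd S w from rfl, h2]
    ring
  obtain ⟨q, hq1, hq2, hq3, hq4⟩ := main hst k (Finset.univ \ S) hF
  refine ⟨q, hq1, hq2, hq3, fun i => ⟨fun hm => ?_, fun hm => ?_⟩⟩
  · exact (Finset.mem_sdiff.1 (hq4 i e hm)).2 heS
  · exact (Finset.mem_sdiff.1 (hq4 i e' hm)).2 he'S
end

section
/- The constraint matrix of the double-cut LP is such that any integral feasibility region compatible with it arises: specifically, the LP minimize ∑_e c_e x_e subject to ∑_{e∈P} x_e ≥ 2 for every s–t path P, 0 ≤ x_e ≤ 1, has an optimal solution that is integral (0/1 valued), and this optimal 0/1 solution is exactly a minimum-cost double cut. -/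
/-- `F` is a double cut: every (edge-simple) directed `s`-`t` path contains at
least two distinct edges of `F`. -/
def IsDoubleCut {V E : Type} (tl hd : E → V) (s t : V) (F : Finset E) : Prop :=
  ∀ l : List E, DWalk tl hd s t l → l.Nodup →
    ∃ a ∈ l, ∃ b ∈ l, a ≠ b ∧ a ∈ F ∧ b ∈ F

open MeasureTheory

section Aux

variable {V E : Type} [Fintype E] [DecidableEq E] {tl hd : E → V}

lemma DWalk.append {a b c' : V} {l1 l2 : List E} (h1 : DWalk tl hd a b l1)
    (h2 : DWalk tl hd b c' l2) : DWalk tl hd a c' (l1 ++ l2) := by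
  induction h1 with
  | nil v => exact h2
  | cons e h ih =>
    simp only [List.cons_append]
    exact DWalk.cons e (ih h2)

lemma DWalk.split {a b : V} {l1 l2 : List E} (h : DWalk tl hd a b (l1 ++ l2)) :
    ∃ m, DWalk tl hd a m l1 ∧ DWalk tl hd m b l2 := by
  induction l1 generalizing a with
  | nil => exact ⟨a, DWalk.nil a, h⟩
  | cons e l ih =>
    cases h with
    | cons _ h' =>
      obtain ⟨m, hm1, hm2⟩ := ih h'
      exact ⟨m, DWalk.cons e hm1, hm2⟩

set_option maxHeartbeats 1000000 in
/-- The key LP-rounding lemma: from any feasible fractional solution `y` one can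
extract a double cut of cost at most the LP cost of `y`. -/
lemma exists_doubleCut_cost_le (s t : V)
    (c y : E → ℝ) (hc : ∀ e, 0 ≤ c e)
    (hy : ∀ e, 0 ≤ y e ∧ y e ≤ 1)
    (hfeas : ∀ l : List E, DWalk tl hd s t l → l.Nodup → (2 : ℝ) ≤ (l.map y).sum) :
    ∃ D : Finset E, IsDoubleCut tl hd s t D ∧ ∑ e ∈ D, c e ≤ ∑ e : E, c e * y e := by
  classical
  set S : V → Set ℝ := fun v =>
    insert 2 {r | ∃ l : List E, DWalk tl hd s v l ∧ l.Nodup ∧ (l.map y).sum = r} with hS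
  have hSne : ∀ v, (S v).Nonempty := fun v => ⟨2, Set.mem_insert _ _⟩
  have hsum0 : ∀ l : List E, (0 : ℝ) ≤ (l.map y).sum := by
    intro l
    apply List.sum_nonneg
    intro x hx
    obtain ⟨e, -, rfl⟩ := List.mem_map.mp hx
    exact (hy e).1
  have hSbdd : ∀ v, BddBelow (S v) := by
    intro v
    refine ⟨0, ?_⟩
    rintro r (rfl | ⟨l, -, -, rfl⟩)
    · norm_num
    · exact hsum0 l
  set d : V → ℝ := fun v => sInf (S v) with hdd
  have d0 : ∀ v, 0 ≤ d v := by
    intro v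
    apply le_csInf (hSne v)
    rintro r (rfl | ⟨l, -, -, rfl⟩)
    · norm_num
    · exact hsum0 l
  have d2 : ∀ v, d v ≤ 2 := fun v => csInf_le (hSbdd v) (Set.mem_insert _ _)
  have ds : d s = 0 := by
    refine le_antisymm ?_ (d0 s)
    exact csInf_le (hSbdd s) (Or.inr ⟨[], DWalk.nil s, List.nodup_nil, rfl⟩)
  have dt : d t = 2 := by
    refine le_antisymm (d2 t) ?_
    apply le_csInf (hSne t)
    rintro r (rfl | ⟨l, hw, hn, rfl⟩)
    · exact le_rfl
    · exact hfeas l hw hn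
  have dtri : ∀ e : E, d (hd e) ≤ d (tl e) + y e := by
    intro e
    have : d (hd e) - y e ≤ d (tl e) := by
      apply le_csInf (hSne (tl e))
      rintro r (rfl | ⟨l, hw, hn, rfl⟩)
      · have := d2 (hd e); have := (hy e).1; linarith
      · by_cases he : e ∈ l
        · obtain ⟨l1, l2, rfl⟩ := List.append_of_mem he
          obtain ⟨m, hm1, hm2⟩ := DWalk.split hw
          cases hm2 with
          | cons _ h' =>
            have hw' : DWalk tl hd s (hd e) (l1 ++ [e]) :=
              DWalk.append hm1 (DWalk.cons e (DWalk.nil (hd e)))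
            have hn' : (l1 ++ [e]).Nodup := by
              refine List.Nodup.sublist ?_ hn
              exact List.Sublist.append_left
                ((List.cons_sublist_cons).2 (List.nil_sublist l2)) l1
            have hle : d (hd e) ≤ ((l1 ++ [e]).map y).sum :=
              csInf_le (hSbdd (hd e)) (Or.inr ⟨l1 ++ [e], hw', hn', rfl⟩)
            have hsum : ((l1 ++ [e]).map y).sum = (l1.map y).sum + y e := by simp
            have hsum2 : ((l1 ++ e :: l2).map y).sum
                = (l1.map y).sum + (y e + (l2.map y).sum) := by simp
            have := hsum0 l2
            have := (hy e).1
            rw [hsum2]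
            rw [hsum] at hle
            linarith
        · have hw' : DWalk tl hd s (hd e) (l ++ [e]) :=
            DWalk.append hw (DWalk.cons e (DWalk.nil (hd e)))
          have hn' : (l ++ [e]).Nodup := by
            simp [List.nodup_append, hn, he]
            rintro a ha rfl
            exact he ha
          have hle : d (hd e) ≤ ((l ++ [e]).map y).sum :=
            csInf_le (hSbdd (hd e)) (Or.inr ⟨l ++ [e], hw', hn', rfl⟩)
          have hsum : ((l ++ [e]).map y).sum = (l.map y).sum + y e := by simp
          rw [hsum] at hle
          linarith
    linarith
  -- crossing lemma
  have cross_ex : ∀ {a b : V} {l : List E}, DWalk tl hd a b l → ∀ θ : ℝ,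
      d a < θ → θ ≤ d b → ∃ e ∈ l, d (tl e) < θ ∧ θ ≤ d (hd e) := by
    intro a b l hw
    induction hw with
    | nil v => intro θ h1 h2; exact absurd (lt_of_le_of_lt h2 h1) (lt_irrefl θ)
    | cons e h ih =>
      intro θ h1 h2
      by_cases hθ : θ ≤ d (hd e)
      · exact ⟨e, List.mem_cons_self, h1, hθ⟩
      · obtain ⟨e', he', h'⟩ := ih θ (not_le.mp hθ) h2
        exact ⟨e', List.mem_cons_of_mem _ he', h'⟩
  set cross : ℝ → Finset E := fun θ =>
    Finset.univ.filter (fun e => d (tl e) < θ ∧ θ ≤ d (hd e)) with hcross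
  -- cross θ ∪ cross (θ+1) is a double cut for 0 < θ ≤ 1
  have DC : ∀ θ : ℝ, 0 < θ → θ ≤ 1 →
      IsDoubleCut tl hd s t (cross θ ∪ cross (θ + 1)) := by
    intro θ hθ0 hθ1 l hw hn
    obtain ⟨e1, he1l, he1⟩ := cross_ex hw θ (by rw [ds]; exact hθ0)
      (by rw [dt]; linarith)
    obtain ⟨e2, he2l, he2⟩ := cross_ex hw (θ + 1) (by rw [ds]; linarith)
      (by rw [dt]; linarith)
    have hne : e1 ≠ e2 := by
      rintro rfl
      have h1 := dtri e1
      have h2 := (hy e1).2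
      have := he1.1
      have := he2.2
      linarith
    refine ⟨e1, he1l, e2, he2l, hne, ?_, ?_⟩
    · exact Finset.mem_union_left _ (Finset.mem_filter.2 ⟨Finset.mem_univ _, he1⟩)
    · exact Finset.mem_union_right _ (Finset.mem_filter.2 ⟨Finset.mem_univ _, he2⟩)
  -- the cost function
  set g : ℝ → ℝ := fun θ =>
    ∑ e : E, (Set.Ioc (d (tl e)) (d (hd e))).indicator (fun _ => c e) θ with hg
  have gcross : ∀ θ, ∑ e ∈ cross θ, c e = g θ := by
    intro θ
    rw [hg, hcross]
    simp [Finset.sum_filter, Set.indicator_apply, Set.mem_Ioc]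
  have gint : ∀ u v : ℝ, IntervalIntegrable g volume u v := by
    intro u v
    rw [hg]
    constructor <;>
    · apply MeasureTheory.integrable_finset_sum
      intro e _
      exact ((integrableOn_const measure_Ioc_lt_top.ne) :
        Integrable (fun _ => c e) _).indicator measurableSet_Ioc
  have gshiftint : ∀ u v : ℝ, IntervalIntegrable (fun θ => g (θ + 1)) volume u v := by
    intro u v
    have := (gint (u + 1) (v + 1)).comp_add_right 1
    simpa using this
  -- integral bound
  have hint_e : ∀ e : E,
      (∫ θ in (0:ℝ)..2, (Set.Ioc (d (tl e)) (d (hd e))).indicator (fun _ => c e) θ)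
        ≤ c e * y e := by
    intro e
    by_cases hle : d (tl e) ≤ d (hd e)
    · have heq : (∫ θ in (0:ℝ)..2,
          (Set.Ioc (d (tl e)) (d (hd e))).indicator (fun _ => c e) θ)
          = (d (hd e) - d (tl e)) * c e := by
        rw [intervalIntegral.integral_of_le (by norm_num : (0:ℝ) ≤ 2),
          MeasureTheory.setIntegral_indicator measurableSet_Ioc]
        have hinter : Set.Ioc (0:ℝ) 2 ∩ Set.Ioc (d (tl e)) (d (hd e))
            = Set.Ioc (d (tl e)) (d (hd e)) := by
          apply Set.inter_eq_self_of_subset_right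
          exact Set.Ioc_subset_Ioc (d0 _) (d2 _)
        rw [hinter, MeasureTheory.setIntegral_const]
        simp [Real.volume_Ioc,
          ENNReal.toReal_ofReal (by linarith : (0:ℝ) ≤ d (hd e) - d (tl e)), hle]
      rw [heq]
      have h1 : d (hd e) - d (tl e) ≤ y e := by have := dtri e; linarith
      have := hc e
      nlinarith
    · have : Set.Ioc (d (tl e)) (d (hd e)) = ∅ :=
        Set.Ioc_eq_empty (fun h => hle h.le)
      rw [this]
      simp [mul_nonneg (hc e) (hy e).1]
  have hint : (∫ θ in (0:ℝ)..2, g θ) ≤ ∑ e : E, c e * y e := by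
    rw [hg, intervalIntegral.integral_finset_sum]
    · exact Finset.sum_le_sum fun e _ => hint_e e
    · intro e _
      constructor <;>
      · exact ((integrableOn_const measure_Ioc_lt_top.ne) :
          Integrable (fun _ => c e) _).indicator measurableSet_Ioc
  set f : ℝ → ℝ := fun θ => g θ + g (θ + 1) with hf
  have fint : IntervalIntegrable f volume 0 1 := (gint 0 1).add (gshiftint 0 1)
  have hintf : (∫ θ in (0:ℝ)..1, f θ) ≤ ∑ e : E, c e * y e := by
    have h1 : (∫ θ in (0:ℝ)..1, f θ)
        = (∫ θ in (0:ℝ)..1, g θ) + ∫ θ in (0:ℝ)..1, g (θ + 1) :=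
      intervalIntegral.integral_add (gint 0 1) (gshiftint 0 1)
    have h2 : (∫ θ in (0:ℝ)..1, g (θ + 1)) = ∫ θ in (1:ℝ)..2, g θ := by
      have := intervalIntegral.integral_comp_add_right (a := 0) (b := 1) g 1
      rw [this]; norm_num
    have h3 : (∫ θ in (0:ℝ)..1, g θ) + (∫ θ in (1:ℝ)..2, g θ)
        = ∫ θ in (0:ℝ)..2, g θ :=
      intervalIntegral.integral_add_adjacent_intervals (gint 0 1) (gint 1 2)
    rw [h1, h2, h3]
    exact hint
  -- finiteness of values of f
  set Vals : Finset ℝ := ((Finset.univ.powerset ×ˢ Finset.univ.powerset :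
      Finset (Finset E × Finset E))).image
    (fun p => (∑ e ∈ p.1, c e) + ∑ e ∈ p.2, c e) with hVals
  have fVals : ∀ θ : ℝ, f θ ∈ Vals := by
    intro θ
    rw [hVals]
    apply Finset.mem_image.2
    refine ⟨(cross θ, cross (θ + 1)), ?_, ?_⟩
    · simp [Finset.mem_product]
    · simp only [hf]
      rw [gcross θ, gcross (θ + 1)]
  -- conclude by contradiction
  by_contra hcon
  push_neg at hcon
  have hstrict : ∀ θ : ℝ, 0 < θ → θ ≤ 1 → (∑ e : E, c e * y e) < f θ := by
    intro θ h0 h1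
    have h2 := hcon _ (DC θ h0 h1)
    have h3 : ∑ e ∈ cross θ ∪ cross (θ + 1), c e
        ≤ (∑ e ∈ cross θ, c e) + ∑ e ∈ cross (θ + 1), c e := by
      have := Finset.sum_union_inter (s₁ := cross θ) (s₂ := cross (θ + 1)) (f := c)
      have hpos : (0:ℝ) ≤ ∑ e ∈ cross θ ∩ cross (θ + 1), c e :=
        Finset.sum_nonneg fun e _ => hc e
      linarith
    calc (∑ e : E, c e * y e) < ∑ e ∈ cross θ ∪ cross (θ + 1), c e := h2
      _ ≤ (∑ e ∈ cross θ, c e) + ∑ e ∈ cross (θ + 1), c e := h3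
      _ = f θ := by rw [gcross θ, gcross (θ + 1)]
  set VF : Finset ℝ := Vals.filter (fun r => (∑ e : E, c e * y e) < r) with hVF
  have hVFne : VF.Nonempty := ⟨f 1, Finset.mem_filter.2 ⟨fVals 1,
    hstrict 1 one_pos le_rfl⟩⟩
  set m : ℝ := VF.min' hVFne with hm
  have hmB : (∑ e : E, c e * y e) < m :=
    (Finset.mem_filter.1 (VF.min'_mem hVFne)).2
  have hmf : ∀ θ : ℝ, 0 < θ → θ ≤ 1 → m ≤ f θ := by
    intro θ h0 h1
    exact VF.min'_le _ (Finset.mem_filter.2 ⟨fVals θ, hstrict θ h0 h1⟩)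
  have hmono : (∫ _ in (0:ℝ)..1, m) ≤ ∫ θ in (0:ℝ)..1, f θ := by
    apply intervalIntegral.integral_mono_ae_restrict (by norm_num : (0:ℝ) ≤ 1)
      intervalIntegrable_const fint
    have h1 : ∀ᵐ θ ∂(volume.restrict (Set.Icc (0:ℝ) 1)), θ ∈ Set.Icc (0:ℝ) 1 :=
      ae_restrict_mem measurableSet_Icc
    have h2 : ∀ᵐ θ ∂(volume.restrict (Set.Icc (0:ℝ) 1)), θ ≠ 0 := by
      apply ae_restrict_of_ae
      rw [MeasureTheory.ae_iff]
      have : {θ : ℝ | ¬ θ ≠ 0} = {0} := by ext θ; simp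
      rw [this]
      exact Real.volume_singleton
    filter_upwards [h1, h2] with θ hθ1 hθ2
    exact hmf θ (lt_of_le_of_ne hθ1.1 (Ne.symm hθ2)) hθ1.2
  rw [intervalIntegral.integral_const] at hmono
  simp at hmono
  linarith

lemma DWalk.eq_of_nil {a b : V} (h : DWalk tl hd a b []) : a = b := by
  cases h; rfl

lemma univ_isDoubleCut {s t : V} (hst : s ≠ t)
    (hnost : ∀ e : E, ¬ (tl e = s ∧ hd e = t)) :
    IsDoubleCut tl hd s t (Finset.univ : Finset E) := by
  intro l hw hn
  match l, hw, hn with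
  | [], hw, _ => cases hw with | nil => exact absurd rfl hst
  | [e], hw, _ =>
    cases hw with
    | cons _ h' =>
      exact absurd ⟨rfl, DWalk.eq_of_nil h'⟩ (hnost e)
  | a :: b :: rest, hw, hn =>
    refine ⟨a, by simp, b, by simp, ?_, Finset.mem_univ _, Finset.mem_univ _⟩
    intro hab
    exact (List.nodup_cons.1 hn).1 (hab ▸ (List.mem_cons_self : b ∈ b :: rest))

end Aux

/-- The double-cut LP (minimize `∑ c_e x_e` subject to `∑_{e ∈ P} x_e ≥ 2` for
every `s`-`t` path `P` and `0 ≤ x ≤ 1`) has an integral (0/1-valued) optimal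
solution, whose support is exactly a minimum-cost double cut. -/
theorem stmt18 {V E : Type} [Fintype E] [DecidableEq E] (tl hd : E → V)
    (s t : V) (hst : s ≠ t)
    (hnost : ∀ e : E, ¬ (tl e = s ∧ hd e = t))
    (c : E → ℝ) (hc : ∀ e, 0 ≤ c e) :
    ∃ x : E → ℝ,
      (∀ e, 0 ≤ x e ∧ x e ≤ 1) ∧
      (∀ l : List E, DWalk tl hd s t l → l.Nodup → (2 : ℝ) ≤ (l.map x).sum) ∧
      (∀ e, x e = 0 ∨ x e = 1) ∧
      (∀ y : E → ℝ, (∀ e, 0 ≤ y e ∧ y e ≤ 1) →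
        (∀ l : List E, DWalk tl hd s t l → l.Nodup → (2 : ℝ) ≤ (l.map y).sum) →
        ∑ e : E, c e * x e ≤ ∑ e : E, c e * y e) ∧
      ∃ D : Finset E, (∀ e : E, e ∈ D ↔ x e = 1) ∧
        IsDoubleCut tl hd s t D ∧
        (∀ D' : Finset E, IsDoubleCut tl hd s t D' →
          ∑ e ∈ D, c e ≤ ∑ e ∈ D', c e) := by
  classical
  -- choose a minimum-cost double cut
  set DCs : Finset (Finset E) :=
    Finset.univ.powerset.filter (fun D => IsDoubleCut tl hd s t D) with hDCs
  have hne : DCs.Nonempty := ⟨Finset.univ, Finset.mem_filter.2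
    ⟨Finset.mem_powerset.2 (Finset.Subset.refl _), univ_isDoubleCut hst hnost⟩⟩
  obtain ⟨D, hDmem, hDmin⟩ := Finset.exists_min_image DCs (fun D => ∑ e ∈ D, c e) hne
  have hDdc : IsDoubleCut tl hd s t D := (Finset.mem_filter.1 hDmem).2
  have hDmin' : ∀ D' : Finset E, IsDoubleCut tl hd s t D' →
      ∑ e ∈ D, c e ≤ ∑ e ∈ D', c e := by
    intro D' hD'
    exact hDmin D' (Finset.mem_filter.2
      ⟨Finset.mem_powerset.2 (Finset.subset_univ _), hD'⟩)
  set x : E → ℝ := fun e => if e ∈ D then 1 else 0 with hx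
  have hx01 : ∀ e, 0 ≤ x e ∧ x e ≤ 1 := by
    intro e; rw [hx]; dsimp only; split <;> norm_num
  have hxint : ∀ e, x e = 0 ∨ x e = 1 := by
    intro e; rw [hx]; dsimp only; split
    · exact Or.inr rfl
    · exact Or.inl rfl
  have hxcost : ∑ e : E, c e * x e = ∑ e ∈ D, c e := by
    rw [hx]
    simp only [mul_ite, mul_one, mul_zero]
    rw [Finset.sum_ite_mem, Finset.univ_inter]
  have hxfeas : ∀ l : List E, DWalk tl hd s t l → l.Nodup → (2 : ℝ) ≤ (l.map x).sum := by
    intro l hw hn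
    obtain ⟨a, hal, b, hbl, hab, haD, hbD⟩ := hDdc l hw hn
    have h1 : (l.map x).sum = ∑ e ∈ l.toFinset, x e := (List.sum_toFinset x hn).symm
    have h2 : ({a, b} : Finset E) ⊆ l.toFinset := by
      intro e he
      rcases Finset.mem_insert.1 he with rfl | he
      · exact List.mem_toFinset.2 hal
      · exact List.mem_toFinset.2 (Finset.mem_singleton.1 he ▸ hbl)
    have h3 : ∑ e ∈ ({a, b} : Finset E), x e ≤ ∑ e ∈ l.toFinset, x e :=
      Finset.sum_le_sum_of_subset_of_nonneg h2 (fun e _ _ => (hx01 e).1)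
    have h4 : ∑ e ∈ ({a, b} : Finset E), x e = x a + x b := Finset.sum_pair hab
    have hxa : x a = 1 := by rw [hx]; simp [haD]
    have hxb : x b = 1 := by rw [hx]; simp [hbD]
    rw [h1]
    rw [h4, hxa, hxb] at h3
    linarith
  refine ⟨x, hx01, hxfeas, hxint, ?_, D, ?_, hDdc, hDmin'⟩
  · intro y hy hyfeas
    obtain ⟨D', hD'dc, hD'cost⟩ := exists_doubleCut_cost_le s t c y hc hy hyfeas
    rw [hxcost]
    exact le_trans (hDmin' D' hD'dc) hD'cost
  · intro e
    rw [hx]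
    dsimp only
    split <;> simp_all
end

section
/- For every monopoly-free set system (E, ℱ) with costs c, and every truthful individually rational mechanism M on (E, ℱ), the frugality ratio of M is at least 1: there exists a bid/cost vector under which M's total payment is at least the value ν(c) of the buyer-pessimal LP. -/
open Finset

/-- For every monopoly-free set system with costs `c`, and every truthful
(monotone, threshold-paying) individually rational mechanism, there is a
bid/cost vector under which the mechanism's total payment is at least the
value of the buyer-pessimal Nash LP; hence the frugality ratio is at least 1. -/
theorem stmt19 {E : Type*} [Fintype E] [DecidableEq E]
    (F : Set (Finset E)) (hne : F.Nonempty)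
    (hmf : ∀ e : E, ∃ S ∈ F, e ∉ S)
    (win : (E → ℝ) → Finset E) (pay : (E → ℝ) → E → ℝ)
    (hfeas : ∀ b : E → ℝ, win b ∈ F)
    (hmono : ∀ (b : E → ℝ) (e : E) (b' : ℝ), e ∈ win b → b' ≤ b e →
      e ∈ win (Function.update b e b'))
    (hIR : ∀ b : E → ℝ, ∀ e ∈ win b, b e ≤ pay b e)
    (hlose : ∀ b : E → ℝ, ∀ e : E, e ∉ win b → pay b e = 0)
    (c : E → ℝ) (hc : ∀ e, 0 ≤ c e)
    (S : Finset E) (hSF : S ∈ F)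
    (hScheap : ∀ T ∈ F, ∑ e ∈ S, c e ≤ ∑ e ∈ T, c e)
    (ν : E → ℝ)
    (hν1 : ∀ e, c e ≤ ν e)
    (hν2 : ∀ e ∉ S, ν e = c e)
    (hν3 : ∀ T ∈ F, ∑ e ∈ S, ν e ≤ ∑ e ∈ T, ν e)
    (hopt : ∀ ν' : E → ℝ, (∀ e, c e ≤ ν' e) → (∀ e ∉ S, ν' e = c e) →
      (∀ T ∈ F, ∑ e ∈ S, ν' e ≤ ∑ e ∈ T, ν' e) →
      ∑ e ∈ S, ν' e ≤ ∑ e ∈ S, ν e) :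
    ∃ b : E → ℝ, ∑ e ∈ S, ν e ≤ ∑ e : E, pay b e := by
  refine ⟨ν, ?_⟩
  have h1 : ∑ e ∈ S, ν e ≤ ∑ e ∈ win ν, ν e := hν3 _ (hfeas ν)
  have h2 : ∑ e ∈ win ν, ν e ≤ ∑ e ∈ win ν, pay ν e :=
    Finset.sum_le_sum fun e he => hIR ν e he
  have h3 : ∑ e ∈ win ν, pay ν e = ∑ e : E, pay ν e := by
    rw [← Finset.sum_subset (Finset.subset_univ (win ν))]
    intro e _ he
    exact hlose ν e he
  linarith
end
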